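/- Suppose c : [ω₁]² → 2 realizes all patterns, let R be the binary relation with domain and range ω₁ defined by α R β iff α = β, or α < β and c(α,β) = 1, and for X ⊆ ω₁ let R_X be the restriction of R with domain X and range ω₁. If X, Y ⊆ ω₁ and X \ Y is uncountable, then R_X is not Tukey reducible to R_Y. -/

import Mathlib

/-- The first uncountable ordinal. -/
noncomputable def omega1 : Ordinal := (Cardinal.aleph 1).ord

/-- The coloring `c : [ω₁]² → 2` realizes all patterns. -/
def RealizesAllPatterns (c : Ordinal → Ordinal → Fin 2) : Prop :=
  ∀ (k l : ℕ), 0 < k → 0 < l →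
    ∀ (A : Set (Fin k → Ordinal)) (B : Set (Fin l → Ordinal)),
      (∀ a ∈ A, StrictMono a ∧ ∀ i, a i < omega1) →
      (∀ b ∈ B, StrictMono b ∧ ∀ j, b j < omega1) →
      (∀ a ∈ A, ∀ a' ∈ A, a ≠ a' → ∀ i i', a i ≠ a' i') →
      (∀ b ∈ B, ∀ b' ∈ B, b ≠ b' → ∀ j j', b j ≠ b' j') →
      ¬ A.Countable → ¬ B.Countable →
      ∀ (χ : Fin k → Fin 2) (π : Fin k → Fin l),
        ∃ a ∈ A, ∃ b ∈ B, (∀ (i : Fin k) (j : Fin l), a i < b j) ∧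
          ∀ i : Fin k, c (a i) (b (π i)) = χ i

/-- The relation `R` on `ω₁`: `α R β` iff `α = β`, or `α < β` and `c(α,β) = 1`. -/
def Rrel (c : Ordinal → Ordinal → Fin 2) (α β : Ordinal) : Prop :=
  α = β ∨ (α < β ∧ c α β = 1)

/-- **Theorem (Moore).** If `c` realizes all patterns and `X, Y ⊆ ω₁` with
`X \ Y` uncountable, then `R_X` (the restriction of `R` with domain `X` and
range `ω₁`) is not Tukey reducible to `R_Y`. -/


lemma countable_Iio {γ : Ordinal} (h : γ < omega1) : (Set.Iio γ).Countable := by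
  rw [Cardinal.countable_iff_lt_aleph_one, Ordinal.mk_Iio_ordinal, Cardinal.lift_lt_aleph_one]
  exact Cardinal.lt_ord.mp h

lemma countable_Iic {γ : Ordinal} (h : γ < omega1) : (Set.Iic γ).Countable := by
  rw [← Set.Iio_insert]
  exact (countable_Iio h).insert γ

lemma uncountable_Iio : ¬ (Set.Iio omega1).Countable := by
  rw [Cardinal.countable_iff_lt_aleph_one, Ordinal.mk_Iio_ordinal, Cardinal.lift_lt_aleph_one, omega1,
    Cardinal.card_ord]
  exact lt_irrefl _

lemma uncountable_diff {Z s : Set Ordinal} (hZ : ¬ Z.Countable) (hs : s.Countable) :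
    ¬ (Z \ s).Countable := fun h => hZ (((h.union hs).mono (by intro x hx; by_cases hxs : x ∈ s <;> simp [hxs, hx])))

lemma uncountable_nonempty {s : Set Ordinal} (hs : ¬ s.Countable) : s.Nonempty := by
  rw [Set.nonempty_iff_ne_empty]; rintro rfl; exact hs Set.countable_empty

lemma sm_pair {u v : Ordinal} (h : u < v) : StrictMono ![u, v] := by
  intro i j hij
  fin_cases i <;> fin_cases j <;> simp_all



lemma exists_free (F : Ordinal → Ordinal) (Z : Set Ordinal) (hZ : ¬ Z.Countable)
    (hfib : ∀ y, ({x | x ∈ Z ∧ F x = y}).Countable) :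
    ∃ M, M ⊆ Z ∧ ¬ M.Countable ∧
      ∀ x ∈ M, ∀ x' ∈ M, x ≠ x' → x ≠ F x' ∧ F x ≠ x' ∧ F x ≠ F x' := by
  set S : Set (Set Ordinal) :=
    {M | M ⊆ Z ∧ ∀ x ∈ M, ∀ x' ∈ M, x ≠ x' → x ≠ F x' ∧ F x ≠ x' ∧ F x ≠ F x'} with hS
  obtain ⟨M, hMmax⟩ := zorn_subset S (by
    intro ch hch hchain
    refine ⟨⋃₀ ch, ⟨?_, ?_⟩, fun s hs => Set.subset_sUnion_of_mem hs⟩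
    · exact Set.sUnion_subset fun s hs => (hch hs).1
    · rintro x ⟨s, hs, hxs⟩ x' ⟨s', hs', hxs'⟩ hne
      rcases hchain.total hs hs' with h | h
      · exact (hch hs').2 x (h hxs) x' hxs' hne
      · exact (hch hs).2 x hxs x' (h hxs') hne)
  have hMS : M ∈ S := hMmax.1
  refine ⟨M, hMS.1, ?_, hMS.2⟩
  intro hMc
  have hC : (M ∪ F '' M).Countable := hMc.union (hMc.image F)
  apply hZ
  have hsub : Z ⊆ (M ∪ F '' M) ∪ ⋃ y ∈ M ∪ F '' M, {x | x ∈ Z ∧ F x = y} := by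
    intro x hx
    by_cases hxM : x ∈ M
    · exact Or.inl (Or.inl hxM)
    have hnotS : insert x M ∉ S := by
      intro hin
      exact hxM (hMmax.2 hin (Set.subset_insert x M) (Set.mem_insert x M))
    have : ¬ (∀ u ∈ insert x M, ∀ v ∈ insert x M, u ≠ v → u ≠ F v ∧ F u ≠ v ∧ F u ≠ F v) := by
      intro hfree
      exact hnotS ⟨Set.insert_subset hx hMS.1, hfree⟩
    push_neg at this
    obtain ⟨u, hu, v, hv, huv, hviol⟩ := this
    rcases Set.mem_insert_iff.mp hu with hux | huM
    · subst hux
      rcases Set.mem_insert_iff.mp hv with hvx | hvM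
      · exact absurd hvx.symm huv
      · by_cases h1 : u = F v
        · exact Or.inl (Or.inr ⟨v, hvM, h1.symm⟩)
        by_cases h2 : F u = v
        · exact Or.inr (Set.mem_biUnion (Or.inl hvM) ⟨hx, h2⟩)
        · exact Or.inr (Set.mem_biUnion (Or.inr ⟨v, hvM, rfl⟩) ⟨hx, hviol h1 h2⟩)
    · rcases Set.mem_insert_iff.mp hv with hvx | hvM
      · subst hvx
        by_cases h1 : u = F v
        · exact Or.inr (Set.mem_biUnion (Or.inl huM) ⟨hx, h1.symm⟩)
        by_cases h2 : F u = v
        · exact Or.inl (Or.inr ⟨u, huM, h2⟩)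
        · exact Or.inr (Set.mem_biUnion (Or.inr ⟨u, huM, rfl⟩) ⟨hx, (hviol h1 h2).symm⟩)
      · obtain ⟨a1, a2, a3⟩ := hMS.2 u huM v hvM huv
        exact absurd (hviol a1 a2) a3
  exact Set.Countable.mono hsub (hC.union (hC.biUnion fun y _ => hfib y))

lemma core (c : Ordinal → Ordinal → Fin 2) (hc : RealizesAllPatterns c)
    {S T : Set Ordinal} (F H : Ordinal → Ordinal)
    (hS : ¬ S.Countable) (hT : ¬ T.Countable)
    (a : Ordinal → Fin 2 → Ordinal) (ix iF : Fin 2) (hne : ix ≠ iF)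
    (hax : ∀ x ∈ S, a x ix = x) (haF : ∀ x ∈ S, a x iF = F x)
    (hasm : ∀ x ∈ S, StrictMono (a x)) (halt : ∀ x ∈ S, ∀ i, a x i < omega1)
    (hainj : ∀ x ∈ S, ∀ x' ∈ S, x ≠ x' → ∀ i i', a x i ≠ a x' i')
    {l : ℕ} (hl : 0 < l) (b : Ordinal → Fin l → Ordinal) (jb jH : Fin l)
    (hbb : ∀ β ∈ T, b β jb = β) (hbH : ∀ β ∈ T, b β jH = H β)
    (hbsm : ∀ β ∈ T, StrictMono (b β)) (hblt : ∀ β ∈ T, ∀ j, b β j < omega1)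
    (hbinj : ∀ β ∈ T, ∀ β' ∈ T, β ≠ β' → ∀ j j', b β j ≠ b β' j') :
    ∃ x ∈ S, ∃ β ∈ T, x < H β ∧ x < β ∧ F x < β ∧
      c (F x) β = 1 ∧ c x (H β) = 0 := by
  have hAinj : Set.InjOn a S := by
    intro x hx x' hx' h
    by_contra hne'
    exact hainj x hx x' hx' hne' ix ix (by rw [h])
  have hBinj : Set.InjOn b T := by
    intro x hx x' hx' h
    by_contra hne'
    exact hbinj x hx x' hx' hne' jb jb (by rw [h])
  have hA : ¬ (a '' S).Countable := fun h =>
    hS (Set.countable_of_injective_of_countable_image hAinj h)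
  have hB : ¬ (b '' T).Countable := fun h =>
    hT (Set.countable_of_injective_of_countable_image hBinj h)
  obtain ⟨a0, ⟨x, hxS, rfl⟩, b0, ⟨β, hβT, rfl⟩, hord, hcol⟩ :=
    hc 2 l (by norm_num) hl (a '' S) (b '' T)
      (by rintro a0 ⟨x, hx, rfl⟩; exact ⟨hasm x hx, halt x hx⟩)
      (by rintro b0 ⟨β, hβ, rfl⟩; exact ⟨hbsm β hβ, hblt β hβ⟩)
      (by rintro a0 ⟨x, hx, rfl⟩ a1 ⟨x', hx', rfl⟩ hne0
          exact hainj x hx x' hx' (fun h => hne0 (by rw [h])))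
      (by rintro b0 ⟨β, hβ, rfl⟩ b1 ⟨β', hβ', rfl⟩ hne0
          exact hbinj β hβ β' hβ' (fun h => hne0 (by rw [h])))
      hA hB (fun i => if i = ix then 0 else 1) (fun i => if i = ix then jH else jb)
  refine ⟨x, hxS, β, hβT, ?_, ?_, ?_, ?_, ?_⟩
  · have := hord ix jH; rwa [hax x hxS, hbH β hβT] at this
  · have := hord ix jb; rwa [hax x hxS, hbb β hβT] at this
  · have := hord iF jb; rwa [haF x hxS, hbb β hβT] at this
  · have := hcol iF
    simp only [if_neg (Ne.symm hne)] at this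
    rwa [haF x hxS, hbb β hβT] at this
  · have := hcol ix
    simp only [if_pos, eq_self_iff_true, if_true] at this
    rwa [hax x hxS, hbH β hβT] at this

lemma fin2_eq_or (i ix iF : Fin 2) (h : ix ≠ iF) : i = ix ∨ i = iF := by
  fin_cases i <;> fin_cases ix <;> fin_cases iF <;> simp_all

lemma sm_one (β : Ordinal) : StrictMono (fun _ : Fin 1 => β) :=
  fun i j h => absurd (Subsingleton.elim i j) (ne_of_lt h)

lemma not_rrel_lt {c : Ordinal → Ordinal → Fin 2} {x δ : Ordinal}
    (hlt : x < δ) (hcol : c x δ = 0) : ¬ Rrel c x δ := by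
  rintro (rfl | ⟨h, h1⟩)
  · exact lt_irrefl _ hlt
  · rw [hcol] at h1; exact absurd h1 (by decide)

lemma not_rrel_gt {c : Ordinal → Ordinal → Fin 2} {x δ : Ordinal}
    (hgt : δ < x) : ¬ Rrel c x δ := by
  rintro (rfl | ⟨h, _⟩)
  · exact lt_irrefl _ hgt
  · exact absurd h (asymm hgt)

lemma bside (c : Ordinal → Ordinal → Fin 2) (hc : RealizesAllPatterns c)
    (F G : Ordinal → Ordinal) (hG : ∀ β, β < omega1 → G β < omega1)
    (S : Set Ordinal) (hSu : ¬ S.Countable)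
    (hSlt : ∀ x ∈ S, x < omega1) (hFlt : ∀ x ∈ S, F x < omega1)
    (hfree : ∀ x ∈ S, ∀ x' ∈ S, x ≠ x' → x ≠ F x' ∧ F x ≠ x' ∧ F x ≠ F x')
    (a : Ordinal → Fin 2 → Ordinal) (ix iF : Fin 2) (hne : ix ≠ iF)
    (hax : ∀ x ∈ S, a x ix = x) (haF : ∀ x ∈ S, a x iF = F x)
    (hasm : ∀ x ∈ S, StrictMono (a x)) :
    ∃ x ∈ S, ∃ β, β < omega1 ∧ Rrel c (F x) β ∧ ¬ Rrel c x (G β) := by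
  have halt : ∀ x ∈ S, ∀ i, a x i < omega1 := by
    intro x hx i
    rcases fin2_eq_or i ix iF hne with rfl | rfl
    · rw [hax x hx]; exact hSlt x hx
    · rw [haF x hx]; exact hFlt x hx
  have hainj : ∀ x ∈ S, ∀ x' ∈ S, x ≠ x' → ∀ i i', a x i ≠ a x' i' := by
    intro x hx x' hx' hxx i i'
    obtain ⟨p1, p2, p3⟩ := hfree x hx x' hx' hxx
    rcases fin2_eq_or i ix iF hne with h | h <;>
      rcases fin2_eq_or i' ix iF hne with h' | h' <;> rw [h, h'] <;>
        simp only [hax x hx, haF x hx, hax x' hx', haF x' hx']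
    · exact hxx
    · exact p1
    · exact p2
    · exact p3
  -- restriction helper
  have key : ∀ S' ⊆ S, ¬ S'.Countable →
      ∀ (T : Set Ordinal), ¬ T.Countable → ∀ (H : Ordinal → Ordinal)
      {l : ℕ}, 0 < l → ∀ (b : Ordinal → Fin l → Ordinal) (jb jH : Fin l),
      (∀ β ∈ T, b β jb = β) → (∀ β ∈ T, b β jH = H β) →
      (∀ β ∈ T, StrictMono (b β)) → (∀ β ∈ T, ∀ j, b β j < omega1) →
      (∀ β ∈ T, ∀ β' ∈ T, β ≠ β' → ∀ j j', b β j ≠ b β' j') →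
      ∃ x ∈ S', ∃ β ∈ T, x < H β ∧ x < β ∧ F x < β ∧
        c (F x) β = 1 ∧ c x (H β) = 0 := by
    intro S' hS'S hS'u T hT H l hl b jb jH hbb hbH hbsm hblt hbinj
    exact core c hc F H hS'u hT a ix iF hne
      (fun x hx => hax x (hS'S hx)) (fun x hx => haF x (hS'S hx))
      (fun x hx => hasm x (hS'S hx)) (fun x hx => halt x (hS'S hx))
      (fun x hx x' hx' => hainj x (hS'S hx) x' (hS'S hx')) hl b jb jH
      hbb hbH hbsm hblt hbinj
  by_cases hfix : ¬ ({β | β < omega1 ∧ G β = β}).Countable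
  · -- many fixed points of G
    obtain ⟨x, hxS, β, hβT, hxH, hxβ, hFβ, hc1, hc0⟩ :=
      key S (le_refl _) hSu _ hfix id (by norm_num) (fun β _ => β) 0 0
        (fun β _ => rfl) (fun β _ => rfl) (fun β _ => sm_one β)
        (fun β hβ _ => hβ.1) (fun β _ β' _ h _ _ => h)
    refine ⟨x, hxS, β, hβT.1, Or.inr ⟨hFβ, hc1⟩, ?_⟩
    rw [hβT.2]
    exact not_rrel_lt hxβ hc0
  · rw [not_not] at hfix
    set T₀ : Set Ordinal := Set.Iio omega1 \ {β | β < omega1 ∧ G β = β} with hT₀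
    have hT₀u : ¬ T₀.Countable := uncountable_diff uncountable_Iio hfix
    have hT₀p : ∀ β ∈ T₀, β < omega1 ∧ G β ≠ β := by
      rintro β ⟨h1, h2⟩
      exact ⟨h1, fun h => h2 ⟨h1, h⟩⟩
    by_cases hbig : ∃ γ, ¬ ({β | β ∈ T₀ ∧ G β = γ}).Countable
    · obtain ⟨γ, hγ⟩ := hbig
      obtain ⟨β₀, hβ₀T, hβ₀G⟩ := uncountable_nonempty hγ
      have hγlt : γ < omega1 := hβ₀G ▸ hG β₀ (hT₀p β₀ hβ₀T).1
      have hS'u : ¬ (S \ Set.Iic γ).Countable :=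
        uncountable_diff hSu (countable_Iic hγlt)
      obtain ⟨x, hxS, β, hβT, _, hxβ, hFβ, hc1, _⟩ :=
        key (S \ Set.Iic γ) Set.diff_subset hS'u _ hγ id (by norm_num)
          (fun β _ => β) 0 0 (fun β _ => rfl) (fun β _ => rfl)
          (fun β _ => sm_one β) (fun β hβ _ => (hT₀p β hβ.1).1)
          (fun β _ β' _ h _ _ => h)
      refine ⟨x, hxS.1, β, (hT₀p β hβT.1).1, Or.inr ⟨hFβ, hc1⟩, ?_⟩
      rw [hβT.2]
      have : γ < x := lt_of_not_ge (fun h => hxS.2 h)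
      exact not_rrel_gt this
    · push_neg at hbig
      obtain ⟨N, hNT, hNu, hNfree⟩ := exists_free G T₀ hT₀u
        hbig
      have hNlt : ∀ β ∈ N, β < omega1 := fun β hβ => (hT₀p β (hNT hβ)).1
      have hNG : ∀ β ∈ N, G β ≠ β := fun β hβ => (hT₀p β (hNT hβ)).2
      have hsplit : ¬ ({β ∈ N | β < G β}).Countable ∨ ¬ ({β ∈ N | G β < β}).Countable := by
        by_contra h
        push_neg at h
        apply hNu
        refine (h.1.union h.2).mono ?_
        intro β hβ
        rcases lt_trichotomy β (G β) with h' | h' | h'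
        · exact Or.inl ⟨hβ, h'⟩
        · exact absurd h'.symm (hNG β hβ)
        · exact Or.inr ⟨hβ, h'⟩
      have hbinjN : ∀ (T' : Set Ordinal), T' ⊆ N → ∀ β ∈ T', ∀ β' ∈ T', β ≠ β' →
          (β ≠ β' ∧ β ≠ G β' ∧ G β ≠ β' ∧ G β ≠ G β') := by
        intro T' hT' β hβ β' hβ' h
        obtain ⟨q1, q2, q3⟩ := hNfree β (hT' hβ) β' (hT' hβ') h
        exact ⟨h, q1, q2, q3⟩
      rcases hsplit with hN1 | hN2
      · -- β < G β
        obtain ⟨x, hxS, β, hβT, hxH, hxβ, hFβ, hc1, hc0⟩ :=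
          key S (le_refl _) hSu _ hN1 G (by norm_num)
            (fun β => ![β, G β]) 0 1
            (fun β _ => rfl) (fun β _ => rfl)
            (fun β hβ => sm_pair hβ.2)
            (by
              intro β hβ j
              fin_cases j
              · simpa using hNlt β hβ.1
              · simpa using hG β (hNlt β hβ.1))
            (by
              intro β hβ β' hβ' h j j'
              obtain ⟨q0, q1, q2, q3⟩ := hbinjN _ (fun _ h => h.1) β hβ β' hβ' h
              fin_cases j <;> fin_cases j' <;> simpa)
        exact ⟨x, hxS, β, hNlt β hβT.1, Or.inr ⟨hFβ, hc1⟩, not_rrel_lt hxH hc0⟩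
      · -- G β < β
        obtain ⟨x, hxS, β, hβT, hxH, hxβ, hFβ, hc1, hc0⟩ :=
          key S (le_refl _) hSu _ hN2 G (by norm_num)
            (fun β => ![G β, β]) 1 0
            (fun β _ => rfl) (fun β _ => rfl)
            (fun β hβ => sm_pair hβ.2)
            (by
              intro β hβ j
              fin_cases j
              · simpa using hG β (hNlt β hβ.1)
              · simpa using hNlt β hβ.1)
            (by
              intro β hβ β' hβ' h j j'
              obtain ⟨q0, q1, q2, q3⟩ := hbinjN _ (fun _ h => h.1) β hβ β' hβ' h
              fin_cases j <;> fin_cases j' <;> simpa)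
        exact ⟨x, hxS, β, hNlt β hβT.1, Or.inr ⟨hFβ, hc1⟩, not_rrel_lt hxH hc0⟩

theorem statement15 (c : Ordinal → Ordinal → Fin 2) (hc : RealizesAllPatterns c)
    (X Y : Set Ordinal) (hX : X ⊆ Set.Iio omega1) (hY : Y ⊆ Set.Iio omega1)
    (hXY : ¬ (X \ Y).Countable) :
    ¬ ∃ (f : X → Y) (g : {o : Ordinal // o < omega1} → {o : Ordinal // o < omega1}),
        ∀ (x : X) (y : {o : Ordinal // o < omega1}),
          Rrel c (f x).val y.val → Rrel c x.val (g y).val := by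
  rintro ⟨f, g, hfg⟩
  classical
  set F : Ordinal → Ordinal :=
    fun α => if h : α ∈ X then ((f ⟨α, h⟩ : Y) : Ordinal) else 0 with hFdef
  set G : Ordinal → Ordinal :=
    fun α => if h : α < omega1 then ((g ⟨α, h⟩ : {o : Ordinal // o < omega1}) : Ordinal) else 0
    with hGdef
  have hFval : ∀ α (h : α ∈ X), F α = (f ⟨α, h⟩ : Y).val := fun α h => dif_pos h
  have hFY : ∀ α ∈ X, F α ∈ Y := fun α h => by rw [hFval α h]; exact (f ⟨α, h⟩).2
  have hFlt : ∀ α ∈ X, F α < omega1 := fun α h => hY (hFY α h)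
  have hGval : ∀ α (h : α < omega1), G α = (g ⟨α, h⟩).val := fun α h => dif_pos h
  have hGlt : ∀ β, β < omega1 → G β < omega1 := fun β h => by
    rw [hGval β h]; exact (g ⟨β, h⟩).2
  have Hred : ∀ x ∈ X, ∀ β, β < omega1 → Rrel c (F x) β → Rrel c x (G β) := by
    intro x hx β hβ hr
    rw [hGval β hβ]
    exact hfg ⟨x, hx⟩ ⟨β, hβ⟩ (by rwa [hFval x hx] at hr)
  have hZlt : ∀ x ∈ X \ Y, x < omega1 := fun x hx => hX hx.1
  by_cases hbig : ∃ y, ¬ ({x | x ∈ X \ Y ∧ F x = y}).Countable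
  · obtain ⟨y, hy⟩ := hbig
    obtain ⟨x₀, hx₀Z, hx₀F⟩ := uncountable_nonempty hy
    have hyY : y ∈ Y := hx₀F ▸ hFY x₀ hx₀Z.1
    have hylt : y < omega1 := hY hyY
    have hγ : G y < omega1 := hGlt y hylt
    obtain ⟨x, ⟨⟨hxZ, hxF⟩, hxγ⟩⟩ :=
      uncountable_nonempty (uncountable_diff hy (countable_Iic hγ))
    have h2 := Hred x hxZ.1 y hylt (Or.inl hxF)
    exact not_rrel_gt (lt_of_not_ge fun h => hxγ h) h2
  · push_neg at hbig
    obtain ⟨M, hMZ, hMu, hMfree⟩ := exists_free F (X \ Y) hXY hbig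
    have hMX : ∀ x ∈ M, x ∈ X := fun x hx => (hMZ hx).1
    have hMne : ∀ x ∈ M, F x ≠ x := fun x hx h => (hMZ hx).2 (h ▸ hFY x (hMX x hx))
    have hsplit : ¬ ({x ∈ M | x < F x}).Countable ∨ ¬ ({x ∈ M | F x < x}).Countable := by
      by_contra h
      push_neg at h
      apply hMu
      refine (h.1.union h.2).mono ?_
      intro x hx
      rcases lt_trichotomy x (F x) with h' | h' | h'
      · exact Or.inl ⟨hx, h'⟩
      · exact absurd h'.symm (hMne x hx)
      · exact Or.inr ⟨hx, h'⟩
    rcases hsplit with hM1 | hM2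
    · obtain ⟨x, hxS, β, hβ, hr1, hr2⟩ :=
        bside c hc F G hGlt _ hM1
          (fun x hx => hZlt x (hMZ hx.1)) (fun x hx => hFlt x (hMX x hx.1))
          (fun x hx x' hx' => hMfree x hx.1 x' hx'.1)
          (fun x => ![x, F x]) 0 1 (by decide)
          (fun x _ => rfl) (fun x _ => rfl) (fun x hx => sm_pair hx.2)
      exact hr2 (Hred x (hMX x hxS.1) β hβ hr1)
    · obtain ⟨x, hxS, β, hβ, hr1, hr2⟩ :=
        bside c hc F G hGlt _ hM2
          (fun x hx => hZlt x (hMZ hx.1)) (fun x hx => hFlt x (hMX x hx.1))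
          (fun x hx x' hx' => hMfree x hx.1 x' hx'.1)
          (fun x => ![F x, x]) 1 0 (by decide)
          (fun x _ => rfl) (fun x _ => rfl) (fun x hx => sm_pair hx.2)
      exact hr2 (Hred x (hMX x hxS.1) β hβ hr1)
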